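/- Let C = ⟨(x^n − λ₀)^ν⟩ be an ideal of R[x]/⟨x^{np^s} − λ⟩, where 0 ≤ ν ≤ e·p^s. Then the RT distance of C is: 1 if 0 ≤ ν ≤ (e−1)p^s; nν − n(e−1)p^s + 1 if (e−1)p^s + 1 ≤ ν ≤ ep^s − 1; and 0 if ν = e·p^s. -/

import Mathlib

open Polynomial

/-- The unique representative of degree `< deg q` of an element of `A[x]/⟨q⟩`
(for `q` monic). -/
noncomputable def polyRep {A : Type} [CommRing A] (q : A[X]) (c : A[X] ⧸ Ideal.span {q}) :
    A[X] :=
  Function.surjInv Ideal.Quotient.mk_surjective c %ₘ q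

open Classical in
/-- RT (Rosenbloom–Tsfasman) weight of a codeword: `1 + deg` of its representative,
and `0` for the zero codeword. -/
noncomputable def wRT {A : Type} [CommRing A] (q : A[X]) (c : A[X] ⧸ Ideal.span {q}) : ℕ :=
  if c = 0 then 0 else (polyRep q c).natDegree + 1

/-- RT distance of a code (an ideal of `A[x]/⟨q⟩`); `0` for the zero code. -/
noncomputable def dRT {A : Type} [CommRing A] (q : A[X])
    (I : Ideal (A[X] ⧸ Ideal.span {q})) : ℕ :=
  sInf {w : ℕ | ∃ c ∈ I, c ≠ 0 ∧ w = wRT q c}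

/- ### Auxiliary lemmas -/

lemma monic_dvd_eq_zero {A : Type*} [CommRing A] {q f : A[X]} (hq : q.Monic)
    (hdvd : q ∣ f) (hlt : f.degree < q.degree) : f = 0 := by
  obtain ⟨k, rfl⟩ := hdvd
  by_contra h0
  have hk : k ≠ 0 := by rintro rfl; simp at h0
  rw [mul_comm, hq.degree_mul] at hlt
  have h1 : (0 : WithBot ℕ) ≤ k.degree := zero_le_degree_iff.mpr hk
  have := add_le_add_left h1 q.degree
  rw [zero_add] at this
  exact absurd (lt_of_le_of_lt this hlt) (lt_irrefl _)

lemma mk_q_eq_zero {A : Type} [CommRing A] (q : A[X]) :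
    Ideal.Quotient.mk (Ideal.span {q}) q = 0 :=
  Ideal.Quotient.eq_zero_iff_mem.mpr (Ideal.subset_span (Set.mem_singleton q))

lemma mk_polyRep {A : Type} [CommRing A] {q : A[X]} (hq : q.Monic) (c : A[X] ⧸ Ideal.span {q}) :
    Ideal.Quotient.mk (Ideal.span {q}) (polyRep q c) = c := by
  unfold polyRep
  rw [Polynomial.modByMonic_eq_sub_mul_div _ q, map_sub, map_mul, mk_q_eq_zero, zero_mul,
    sub_zero]
  exact Function.surjInv_eq Ideal.Quotient.mk_surjective c

lemma polyRep_degree_lt {A : Type} [CommRing A] {q : A[X]} (hq : q.Monic) [Nontrivial A]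
    (c : A[X] ⧸ Ideal.span {q}) :
    (polyRep q c).degree < q.degree :=
  Polynomial.degree_modByMonic_lt _ hq

lemma polyRep_mk_eq {A : Type} [CommRing A] {q : A[X]} (hq : q.Monic) [Nontrivial A]
    (f : A[X]) (hf : f.degree < q.degree) :
    polyRep q (Ideal.Quotient.mk (Ideal.span {q}) f) = f := by
  have h1 := mk_polyRep hq (Ideal.Quotient.mk (Ideal.span {q}) f)
  have h2 : Ideal.Quotient.mk (Ideal.span {q})
      (polyRep q (Ideal.Quotient.mk (Ideal.span {q}) f) - f) = 0 := by
    rw [map_sub, h1, sub_self]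
  have hdvd : q ∣ _ := Ideal.mem_span_singleton.mp (Ideal.Quotient.eq_zero_iff_mem.mp h2)
  have hlt : (polyRep q (Ideal.Quotient.mk (Ideal.span {q}) f) - f).degree < q.degree :=
    lt_of_le_of_lt (Polynomial.degree_sub_le _ _) (max_lt (polyRep_degree_lt hq _) hf)
  exact sub_eq_zero.mp (monic_dvd_eq_zero hq hdvd hlt)

lemma dRT_eq {A : Type} [CommRing A] (q : A[X]) (I : Ideal (A[X] ⧸ Ideal.span {q})) (d : ℕ)
    (hmem : ∃ c ∈ I, c ≠ 0 ∧ d = wRT q c)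
    (hlb : ∀ x : ℕ, (∃ c ∈ I, c ≠ 0 ∧ x = wRT q c) → d ≤ x) : dRT q I = d := by
  unfold dRT
  have h1 : sInf {w : ℕ | ∃ c ∈ I, c ≠ 0 ∧ w = wRT q c} ∈
      {w : ℕ | ∃ c ∈ I, c ≠ 0 ∧ w = wRT q c} := Nat.sInf_mem ⟨d, hmem⟩
  exact le_antisymm (Nat.sInf_le hmem) (hlb _ h1)

lemma wRT_ne_zero {A : Type} [CommRing A] (q : A[X]) {c : A[X] ⧸ Ideal.span {q}} (hc : c ≠ 0) :
    wRT q c = (polyRep q c).natDegree + 1 := by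
  unfold wRT
  rw [if_neg hc]

lemma ann_of_mul_pow_eq_zero {R : Type} [CommRing R] {e : ℕ} {γ : R} (hγ : γ ^ (e-1) ≠ 0)
    (hmax : ∀ a : R, a ∈ Ideal.span {γ} ↔ ¬ IsUnit a)
    {a : R} (ha : a * γ ^ (e-1) = 0) : a ∈ Ideal.span {γ} := by
  rw [hmax]
  intro hu
  exact hγ (by rwa [hu.mul_right_eq_zero] at ha)

lemma ann_gamma {R : Type} [CommRing R] {e : ℕ} {γ : R} (hγ : γ ^ (e-1) ≠ 0)
    (hmax : ∀ a : R, a ∈ Ideal.span {γ} ↔ ¬ IsUnit a)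
    {a : R} (ha : a * γ = 0) : ∃ b, a = γ ^ (e-1) * b := by
  suffices h : ∀ i, i ≤ e - 1 → ∃ b, a = γ ^ i * b from h (e-1) le_rfl
  intro i hi
  induction i with
  | zero => exact ⟨a, by simp⟩
  | succ j ih =>
    obtain ⟨b, rfl⟩ := ih (le_trans (Nat.le_succ j) hi)
    have h1 : b * γ ^ (j+1) = 0 := by rw [pow_succ]; linear_combination ha
    have hb : ¬ IsUnit b := by
      intro hu
      rw [hu.mul_right_eq_zero] at h1
      apply hγ
      have : γ ^ (e-1) = γ ^ (j+1) * γ ^ (e-1-(j+1)) := by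
        rw [← pow_add]
        congr 1
        omega
      rw [this, h1, zero_mul]
    obtain ⟨c, hc⟩ := Ideal.mem_span_singleton.mp ((hmax b).mpr hb)
    exact ⟨c, by rw [hc, pow_succ]; ring⟩

lemma span_isMaximal {R : Type} [CommRing R] {γ : R}
    (hmax : ∀ a : R, a ∈ Ideal.span {γ} ↔ ¬ IsUnit a) : (Ideal.span {γ}).IsMaximal := by
  rw [Ideal.isMaximal_iff]
  refine ⟨fun h => (hmax 1).mp h isUnit_one, fun J x hIJ hx hxJ => ?_⟩
  have hux : IsUnit x := not_not.mp (fun h => hx ((hmax x).mpr h))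
  obtain ⟨u, rfl⟩ := hux
  simpa using J.mul_mem_left (↑u⁻¹) hxJ

lemma charP_of_natCast_zero_of_nontrivial {Q : Type} [CommRing Q] [Nontrivial Q]
    (p : ℕ) (hp : p.Prime) (h0 : ((p:ℕ) : Q) = 0) : CharP Q p := by
  haveI := ringChar.charP Q
  have hd : ringChar Q ∣ p := (CharP.cast_eq_zero_iff Q (ringChar Q) p).mp h0
  rcases hp.eq_one_or_self_of_dvd _ hd with h | h
  · exact absurd h (CharP.char_ne_one Q (ringChar Q))
  · rw [← h]; exact ringChar.charP Q

lemma charP_quot_p {R : Type} [CommRing R] (p : ℕ) (hp : p.Prime)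
    (hpu : ¬ IsUnit ((p:ℕ) : R)) : CharP (R ⧸ Ideal.span {((p:ℕ) : R)}) p := by
  haveI : Nontrivial (R ⧸ Ideal.span {((p:ℕ) : R)}) :=
    Ideal.Quotient.nontrivial_iff.mpr (by rw [Ne, Ideal.span_singleton_eq_top]; exact hpu)
  apply charP_of_natCast_zero_of_nontrivial p hp
  have h1 : ((p:ℕ) : R ⧸ Ideal.span {((p:ℕ) : R)}) =
      Ideal.Quotient.mk _ ((p:ℕ) : R) := (map_natCast (Ideal.Quotient.mk _) p).symm
  rw [h1, Ideal.Quotient.eq_zero_iff_mem]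
  exact Ideal.subset_span (Set.mem_singleton _)

lemma charP_residue {R : Type} [CommRing R] [Finite R] (p m : ℕ) (hp : p.Prime) (hm : 0 < m)
    {γ : R} (hmax : ∀ a : R, a ∈ Ideal.span {γ} ↔ ¬ IsUnit a)
    (hres : Nat.card (R ⧸ Ideal.span {γ}) = p ^ m) :
    CharP (R ⧸ Ideal.span {γ}) p := by
  haveI : (Ideal.span {γ}).IsMaximal := span_isMaximal hmax
  letI : Field (R ⧸ Ideal.span {γ}) := Ideal.Quotient.field _
  haveI : Finite (R ⧸ Ideal.span {γ}) :=
    Finite.of_surjective _ Ideal.Quotient.mk_surjective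
  letI : Fintype (R ⧸ Ideal.span {γ}) := Fintype.ofFinite _
  apply charP_of_natCast_zero_of_nontrivial p hp
  have hcard : ((Fintype.card (R ⧸ Ideal.span {γ}) : ℕ) : R ⧸ Ideal.span {γ}) = 0 :=
    Nat.cast_card_eq_zero _
  have h1 : ((p ^ m : ℕ) : R ⧸ Ideal.span {γ}) = 0 := by
    rw [← hres, Nat.card_eq_fintype_card]; exact hcard
  push_cast at h1
  exact pow_eq_zero_iff hm.ne' |>.mp h1

/-- Frobenius-type decomposition over `R`. -/
lemma frob_decomp {R : Type} [CommRing R] [Nontrivial R] (p s n : ℕ) (hp : p.Prime)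
    (hn : 0 < n) (l₀ : R) (hpu : ¬ IsUnit ((p:ℕ) : R)) :
    ∃ k : R[X], (X ^ n - C l₀) ^ p ^ s =
      X ^ (n * p ^ s) - C (l₀ ^ p ^ s) + C ((p:ℕ) : R) * ((X ^ n - C l₀) * k) := by
  haveI : Fact p.Prime := ⟨hp⟩
  haveI := charP_quot_p p hp hpu
  set mkp := Ideal.Quotient.mk (Ideal.span {((p:ℕ) : R)}) with hmkp
  set P : R[X] := (X ^ n - C l₀) ^ p ^ s - (X ^ (n * p ^ s) - C (l₀ ^ p ^ s)) with hP
  have hmap : P.map mkp = 0 := by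
    simp only [hP, Polynomial.map_sub, Polynomial.map_pow, Polynomial.map_X, Polynomial.map_C,
      map_pow, C_pow]
    rw [sub_pow_char_pow, ← pow_mul]
    ring
  have hdvd : C ((p:ℕ) : R) ∣ P := by
    rw [Polynomial.C_dvd_iff_dvd_coeff]
    intro i
    have h0 : mkp (P.coeff i) = 0 := by
      rw [← Polynomial.coeff_map, hmap, Polynomial.coeff_zero]
    exact Ideal.mem_span_singleton.mp (Ideal.Quotient.eq_zero_iff_mem.mp h0)
  obtain ⟨g2, hg2⟩ := hdvd
  have hps : p ^ s ≠ 0 := (pow_pos hp.pos s).ne'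
  set f : R[X] := (X - C l₀) ^ p ^ s - X ^ p ^ s + C (l₀ ^ p ^ s) with hf
  have hroot : f.IsRoot l₀ := by
    simp [hf, IsRoot, zero_pow hps]
  obtain ⟨g, hg⟩ := dvd_iff_isRoot.mpr hroot
  have hPfac : P = (X ^ n - C l₀) * eval₂ C (X ^ n : R[X]) g := by
    have h2 := congrArg (eval₂ (C : R →+* R[X]) (X ^ n : R[X])) hg
    rw [hf] at h2
    rw [eval₂_add, eval₂_sub, eval₂_pow, eval₂_sub, eval₂_X, eval₂_C, eval₂_pow, eval₂_X,
      eval₂_C, eval₂_mul, eval₂_sub, eval₂_X, eval₂_C, ← pow_mul] at h2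
    rw [hP]
    linear_combination h2
  set g₀ : R[X] := X ^ n - C l₀ with hg₀def
  have hg₀ : g₀.Monic := monic_X_pow_sub_C _ hn.ne'
  have hdiv : g2 %ₘ g₀ + g₀ * (g2 /ₘ g₀) = g2 := modByMonic_add_div g2 g₀
  have key : g₀ * (eval₂ C (X ^ n : R[X]) g - C ((p:ℕ) : R) * (g2 /ₘ g₀)) =
      C ((p:ℕ) : R) * (g2 %ₘ g₀) := by
    have h3 : g₀ * eval₂ C (X ^ n : R[X]) g = C ((p:ℕ) : R) * (g2 %ₘ g₀ + g₀ * (g2 /ₘ g₀)) := by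
      rw [hdiv, ← hg2, hPfac]
    linear_combination h3
  have hlt : (C ((p:ℕ) : R) * (g2 %ₘ g₀)).degree < g₀.degree := by
    calc (C ((p:ℕ) : R) * (g2 %ₘ g₀)).degree ≤ (C ((p:ℕ) : R)).degree + (g2 %ₘ g₀).degree :=
          degree_mul_le _ _
    _ ≤ 0 + (g2 %ₘ g₀).degree := add_le_add_left degree_C_le _
    _ = (g2 %ₘ g₀).degree := zero_add _
    _ < g₀.degree := degree_modByMonic_lt _ hg₀
  have hz : C ((p:ℕ) : R) * (g2 %ₘ g₀) = 0 :=
    monic_dvd_eq_zero hg₀ ⟨_, key.symm⟩ hlt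
  have hz2 : eval₂ C (X ^ n : R[X]) g - C ((p:ℕ) : R) * (g2 /ₘ g₀) = 0 :=
    (hg₀.mul_right_eq_zero_iff).mp (by rw [key, hz])
  refine ⟨g2 /ₘ g₀, ?_⟩
  have h4 : eval₂ C (X ^ n : R[X]) g = C ((p:ℕ) : R) * (g2 /ₘ g₀) := by
    linear_combination hz2
  have h5 : P = C ((p:ℕ) : R) * (g₀ * (g2 /ₘ g₀)) := by
    rw [hPfac, h4]; ring
  rw [hP] at h5
  linear_combination h5

lemma frob_field {F : Type} [CommRing F] (p k n : ℕ) (hp : p.Prime) [CharP F p] (a : F) :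
    ((X : F[X]) ^ n - C a) ^ p ^ k = X ^ (n * p ^ k) - C (a ^ p ^ k) := by
  haveI : Fact p.Prime := ⟨hp⟩
  rw [sub_pow_char_pow, ← pow_mul, ← C_pow]

set_option maxHeartbeats 1000000 in
set_option synthInstance.maxHeartbeats 200000 in
/-- RT distances of the `λ`-constacyclic codes `⟨(x^n − λ₀)^ν⟩` of
length `np^s` over a finite chain ring of nilpotency index `e`, `λ = λ₀^{p^s} + γw`. -/
theorem stmt18 {R : Type} [CommRing R] [Finite R]
    (e p m s n : ℕ) (he : 2 ≤ e) (hp : p.Prime) (hm : 0 < m) (hs : 0 < s) (hn : 0 < n)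
    (hnp : Nat.gcd n p = 1)
    (γ : R) (hγ : γ ^ (e - 1) ≠ 0) (hγe : γ ^ e = 0)
    (hmax : ∀ a : R, a ∈ Ideal.span {γ} ↔ ¬ IsUnit a)
    (hres : Nat.card (R ⧸ Ideal.span {γ}) = p ^ m)
    (l₀ w : R) (hl₀ : IsUnit l₀) (hw : IsUnit w)
    (hirr : Irreducible ((X ^ n - C l₀ : R[X]).map (Ideal.Quotient.mk (Ideal.span {γ}))))
    (ν : ℕ) (hν : ν ≤ e * p ^ s) :
    (ν ≤ (e - 1) * p ^ s →
      dRT (X ^ (n * p ^ s) - C (l₀ ^ p ^ s + γ * w))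
        (Ideal.span {Ideal.Quotient.mk
          (Ideal.span {(X ^ (n * p ^ s) - C (l₀ ^ p ^ s + γ * w) : R[X])})
          ((X ^ n - C l₀) ^ ν)}) = 1) ∧
    ((e - 1) * p ^ s + 1 ≤ ν → ν ≤ e * p ^ s - 1 →
      dRT (X ^ (n * p ^ s) - C (l₀ ^ p ^ s + γ * w))
        (Ideal.span {Ideal.Quotient.mk
          (Ideal.span {(X ^ (n * p ^ s) - C (l₀ ^ p ^ s + γ * w) : R[X])})
          ((X ^ n - C l₀) ^ ν)}) = n * ν - n * (e - 1) * p ^ s + 1) ∧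
    (ν = e * p ^ s →
      dRT (X ^ (n * p ^ s) - C (l₀ ^ p ^ s + γ * w))
        (Ideal.span {Ideal.Quotient.mk
          (Ideal.span {(X ^ (n * p ^ s) - C (l₀ ^ p ^ s + γ * w) : R[X])})
          ((X ^ n - C l₀) ^ ν)}) = 0) := by
  haveI hNT : Nontrivial R := nontrivial_of_ne _ _ hγ
  have hps0 : 0 < p ^ s := pow_pos hp.pos s
  have hN0 : 0 < n * p ^ s := Nat.mul_pos hn hps0
  set L : R := l₀ ^ p ^ s + γ * w with hL
  set q : R[X] := X ^ (n * p ^ s) - C L with hqdef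
  have hqm : q.Monic := monic_X_pow_sub_C _ hN0.ne'
  have hqdeg : q.degree = ((n * p ^ s : ℕ) : WithBot ℕ) := degree_X_pow_sub_C hN0 _
  set mkq := Ideal.Quotient.mk (Ideal.span {q}) with hmkq
  haveI instF : CharP (R ⧸ Ideal.span {γ}) p := charP_residue p m hp hm hmax hres
  have hpspan : ((p : ℕ) : R) ∈ Ideal.span {γ} := by
    have h0 : ((p : ℕ) : R ⧸ Ideal.span {γ}) = 0 := CharP.cast_eq_zero _ p
    rwa [← map_natCast (Ideal.Quotient.mk (Ideal.span {γ})) p,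
      Ideal.Quotient.eq_zero_iff_mem] at h0
  have hpu : ¬ IsUnit ((p : ℕ) : R) := (hmax _).mp hpspan
  obtain ⟨r, hr⟩ : ∃ r, ((p : ℕ) : R) = γ * r := Ideal.mem_span_singleton.mp hpspan
  obtain ⟨k, hk⟩ := frob_decomp p s n hp hn l₀ hpu
  set h : R[X] := C w + C r * ((X ^ n - C l₀) * k) with hh
  have hQ : (X ^ n - C l₀ : R[X]) ^ p ^ s = q + C γ * h := by
    rw [hk, hr, hqdef, hL, hh]
    simp only [C_add, C_mul]
    ring
  have hq0 : mkq q = 0 := mk_q_eq_zero q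
  have hU : (mkq (X ^ n - C l₀)) ^ p ^ s = mkq (C γ) * mkq h := by
    rw [← map_pow, hQ, map_add, hq0, zero_add, map_mul]
  have hgpow : ∀ j : ℕ, (mkq (C γ)) ^ j = mkq (C (γ ^ j)) := by
    intro j; rw [← map_pow, ← C_pow]
  have hγe0 : (mkq (C γ)) ^ e = 0 := by
    rw [hgpow, hγe, C_0, map_zero]
  have hUe : (mkq (X ^ n - C l₀)) ^ (e * p ^ s) = 0 := by
    rw [mul_comm e, pow_mul, hU, mul_pow, hγe0, zero_mul]
  have hUnil : IsNilpotent (mkq (X ^ n - C l₀)) := ⟨e * p ^ s, hUe⟩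
  have hHu : IsUnit (mkq h) := by
    rw [hh, map_add]
    refine IsNilpotent.isUnit_add_left_of_commute ?_ ?_ (Commute.all _ _)
    · rw [map_mul, map_mul]
      exact (Commute.all _ _).isNilpotent_mul_left
        ((Commute.all _ _).isNilpotent_mul_right hUnil)
    · simpa using hw.map (mkq.comp (C : R →+* R[X]))
  have hpow1 : (mkq (X ^ n - C l₀)) ^ ((e - 1) * p ^ s)
      = mkq (C (γ ^ (e - 1))) * (mkq h) ^ (e - 1) := by
    rw [mul_comm (e - 1), pow_mul, hU, mul_pow, hgpow]
  refine ⟨?_, ?_, ?_⟩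
  · -- Case 1 : ν ≤ (e-1) p^s
    intro hν1
    have hlt0 : (C (γ ^ (e - 1)) : R[X]).degree < q.degree := by
      refine lt_of_le_of_lt degree_C_le ?_
      rw [hqdeg]
      exact_mod_cast hN0
    have hc₀ne : mkq (C (γ ^ (e - 1))) ≠ 0 := by
      intro h0
      have hdvd := Ideal.mem_span_singleton.mp (Ideal.Quotient.eq_zero_iff_mem.mp h0)
      have h1 := monic_dvd_eq_zero hqm hdvd hlt0
      rw [C_eq_zero] at h1
      exact hγ h1
    have hmem : mkq (C (γ ^ (e - 1))) ∈ Ideal.span {mkq ((X ^ n - C l₀) ^ ν)} := by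
      rw [Ideal.mem_span_singleton']
      obtain ⟨u, hu⟩ := hHu
      refine ⟨(↑u⁻¹ : R[X] ⧸ Ideal.span {q}) ^ (e - 1)
        * (mkq (X ^ n - C l₀)) ^ ((e - 1) * p ^ s - ν), ?_⟩
      rw [map_pow mkq (X ^ n - C l₀) ν]
      have hsplit : (mkq (X ^ n - C l₀)) ^ ((e - 1) * p ^ s - ν) * (mkq (X ^ n - C l₀)) ^ ν
          = (mkq (X ^ n - C l₀)) ^ ((e - 1) * p ^ s) := by
        rw [← pow_add]; congr 1; omega
      calc (↑u⁻¹ : R[X] ⧸ Ideal.span {q}) ^ (e - 1)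
            * (mkq (X ^ n - C l₀)) ^ ((e - 1) * p ^ s - ν) * (mkq (X ^ n - C l₀)) ^ ν
          = (↑u⁻¹ : R[X] ⧸ Ideal.span {q}) ^ (e - 1)
            * (mkq (X ^ n - C l₀)) ^ ((e - 1) * p ^ s) := by
            rw [mul_assoc, hsplit]
        _ = (↑u⁻¹ : R[X] ⧸ Ideal.span {q}) ^ (e - 1)
            * (mkq (C (γ ^ (e - 1))) * (↑u : R[X] ⧸ Ideal.span {q}) ^ (e - 1)) := by
            rw [hpow1, ← hu]
        _ = mkq (C (γ ^ (e - 1))) * ((↑u⁻¹ * ↑u : R[X] ⧸ Ideal.span {q}) ^ (e - 1)) := by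
            rw [mul_pow]; ring
        _ = mkq (C (γ ^ (e - 1))) := by
            rw [Units.inv_mul, one_pow, mul_one]
    refine dRT_eq _ _ 1 ⟨_, hmem, hc₀ne, ?_⟩ ?_
    · rw [wRT_ne_zero _ hc₀ne, polyRep_mk_eq hqm _ hlt0, natDegree_C]
    · rintro x ⟨c, -, hc0, rfl⟩
      rw [wRT_ne_zero _ hc0]
      omega
  · -- Case 2
    intro hν1 hν2
    have hle : (e - 1) * p ^ s ≤ ν := Nat.le_of_succ_le hν1
    set t := ν - (e - 1) * p ^ s with htdef
    have hts : ν = (e - 1) * p ^ s + t := (Nat.add_sub_cancel' hle).symm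
    have he2 : e * p ^ s = (e - 1) * p ^ s + p ^ s := by
      have h9 : e - 1 + 1 = e := by omega
      calc e * p ^ s = (e - 1 + 1) * p ^ s := by rw [h9]
        _ = (e - 1) * p ^ s + p ^ s := by ring
    have ht1 : 1 ≤ t := by omega
    have htlt : t < p ^ s := by omega
    set f₁ : R[X] := C (γ ^ (e - 1)) * (X ^ n - C l₀) ^ t with hf₁
    have hcoef : f₁.coeff (n * t) = γ ^ (e - 1) := by
      rw [hf₁, coeff_C_mul]
      have hmono : ((X ^ n - C l₀ : R[X]) ^ t).Monic := (monic_X_pow_sub_C _ hn.ne').pow t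
      have hnt : n * t = ((X ^ n - C l₀ : R[X]) ^ t).natDegree := by
        rw [(monic_X_pow_sub_C l₀ hn.ne').natDegree_pow, natDegree_X_pow_sub_C]
        ring
      rw [hnt, hmono.coeff_natDegree, mul_one]
    have hf₁ne : f₁ ≠ 0 := by
      intro h0
      rw [h0, coeff_zero] at hcoef
      exact hγ hcoef.symm
    have hf₁deg : f₁.natDegree = n * t := by
      refine le_antisymm ?_ (le_natDegree_of_ne_zero (by rw [hcoef]; exact hγ))
      rw [hf₁]
      refine le_trans natDegree_mul_le ?_
      rw [natDegree_C, (monic_X_pow_sub_C l₀ hn.ne').natDegree_pow, natDegree_X_pow_sub_C,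
        zero_add, Nat.mul_comm t n]
    have hf₁lt : f₁.degree < q.degree := by
      rw [degree_eq_natDegree hf₁ne, hqdeg, hf₁deg]
      have hx : n * t < n * p ^ s := mul_lt_mul_of_pos_left htlt hn
      exact_mod_cast hx
    have hc₁ne : mkq f₁ ≠ 0 := fun h0 => hf₁ne (monic_dvd_eq_zero hqm
      (Ideal.mem_span_singleton.mp (Ideal.Quotient.eq_zero_iff_mem.mp h0)) hf₁lt)
    have hpowν : (mkq (X ^ n - C l₀)) ^ ν
        = mkq (C (γ ^ (e - 1))) * (mkq h) ^ (e - 1) * (mkq (X ^ n - C l₀)) ^ t := by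
      rw [hts, pow_add, hpow1]
    have hmem : mkq f₁ ∈ Ideal.span {mkq ((X ^ n - C l₀) ^ ν)} := by
      rw [Ideal.mem_span_singleton']
      obtain ⟨u, hu⟩ := hHu
      refine ⟨(↑u⁻¹ : R[X] ⧸ Ideal.span {q}) ^ (e - 1), ?_⟩
      rw [map_pow mkq (X ^ n - C l₀) ν, hpowν, hf₁, map_mul, map_pow mkq (X ^ n - C l₀) t]
      calc (↑u⁻¹ : R[X] ⧸ Ideal.span {q}) ^ (e - 1)
            * (mkq (C (γ ^ (e - 1))) * (mkq h) ^ (e - 1) * (mkq (X ^ n - C l₀)) ^ t)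
          = (mkq (C (γ ^ (e - 1))) * (mkq (X ^ n - C l₀)) ^ t)
            * ((↑u⁻¹ : R[X] ⧸ Ideal.span {q}) ^ (e - 1) * (mkq h) ^ (e - 1)) := by ring
        _ = mkq (C (γ ^ (e - 1))) * (mkq (X ^ n - C l₀)) ^ t := by
            rw [← hu, ← mul_pow, Units.inv_mul, one_pow, mul_one]
    have hwt : wRT q (mkq f₁) = n * t + 1 := by
      rw [wRT_ne_zero _ hc₁ne, polyRep_mk_eq hqm _ hf₁lt, hf₁deg]
    have harith : n * ν - n * (e - 1) * p ^ s + 1 = n * t + 1 := by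
      have h1 : n * ν = n * ((e - 1) * p ^ s) + n * t := by rw [hts]; ring
      have h2 : n * (e - 1) * p ^ s = n * ((e - 1) * p ^ s) := by ring
      omega
    rw [harith]
    refine dRT_eq _ _ (n * t + 1) ⟨_, hmem, hc₁ne, hwt.symm⟩ ?_
    rintro x ⟨c, hcmem, hc0, rfl⟩
    rw [wRT_ne_zero _ hc0]
    obtain ⟨a, ha⟩ := Ideal.mem_span_singleton'.mp hcmem
    rw [map_pow mkq (X ^ n - C l₀) ν] at ha
    set ρ := polyRep q c with hρdef
    have hmkρ : mkq ρ = c := mk_polyRep hqm c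
    have hρdeg : ρ.degree < q.degree := polyRep_degree_lt hqm c
    have hρne : ρ ≠ 0 := fun h0 => hc0 (by rw [← hmkρ, h0, map_zero])
    have hγγ : γ * γ ^ (e - 1) = 0 := by
      have h1 : γ * γ ^ (e - 1) = γ ^ e := by
        rw [← pow_succ']
        congr 1
        omega
      rw [h1, hγe]
    have hCC : mkq (C γ) * mkq (C (γ ^ (e - 1))) = 0 := by
      rw [← map_mul, ← C_mul, hγγ, C_0, map_zero]
    have hγc : mkq (C γ) * c = 0 := by
      rw [← ha, hpowν]
      calc mkq (C γ) * (a * (mkq (C (γ ^ (e - 1))) * (mkq h) ^ (e - 1)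
            * (mkq (X ^ n - C l₀)) ^ t))
          = (mkq (C γ) * mkq (C (γ ^ (e - 1))))
            * (a * (mkq h) ^ (e - 1) * (mkq (X ^ n - C l₀)) ^ t) := by ring
        _ = 0 := by rw [hCC, zero_mul]
    have hCγρ : C γ * ρ = 0 := by
      refine monic_dvd_eq_zero hqm ?_ ?_
      · apply Ideal.mem_span_singleton.mp
        apply Ideal.Quotient.eq_zero_iff_mem.mp
        rw [map_mul, hmkρ]
        exact hγc
      · calc (C γ * ρ).degree ≤ (C γ).degree + ρ.degree := degree_mul_le _ _
          _ ≤ 0 + ρ.degree := add_le_add_left degree_C_le _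
          _ = ρ.degree := zero_add _
          _ < q.degree := hρdeg
    have hbex : ∀ i, ∃ bb, ρ.coeff i = γ ^ (e - 1) * bb := by
      intro i
      apply ann_gamma hγ hmax
      rw [mul_comm, ← coeff_C_mul, hCγρ, coeff_zero]
    choose b hb using hbex
    set σ : R[X] := ∑ i ∈ Finset.range (ρ.natDegree + 1), monomial i (b i) with hσ
    have hσcoeff : ∀ j, σ.coeff j = if j ≤ ρ.natDegree then b j else 0 := by
      intro j
      rw [hσ, finset_sum_coeff]
      simp only [coeff_monomial]
      rw [Finset.sum_ite_eq' (Finset.range (ρ.natDegree + 1)) j b]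
      simp [Nat.lt_succ_iff]
    have hρσ : ρ = C (γ ^ (e - 1)) * σ := by
      ext j
      rw [coeff_C_mul, hσcoeff j]
      by_cases hj : j ≤ ρ.natDegree
      · rw [if_pos hj]; exact hb j
      · rw [if_neg hj, mul_zero]
        exact coeff_eq_zero_of_natDegree_lt (by omega)
    set mkg := Ideal.Quotient.mk (Ideal.span {γ}) with hmkg
    have hσbne : σ.map mkg ≠ 0 := by
      intro h0
      apply hρne
      ext i
      have h1 : mkg (σ.coeff i) = 0 := by
        rw [← Polynomial.coeff_map, h0, Polynomial.coeff_zero]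
      obtain ⟨ci, hci⟩ := Ideal.mem_span_singleton.mp (Ideal.Quotient.eq_zero_iff_mem.mp h1)
      rw [hρσ, coeff_C_mul, hci, Polynomial.coeff_zero, ← mul_assoc, ← pow_succ]
      have he1 : e - 1 + 1 = e := by omega
      rw [he1, hγe, zero_mul]
    set qb := q.map mkg with hqb
    set mkT := Ideal.Quotient.mk (Ideal.span {qb}) with hmkT
    have hker0 : ∀ aa ∈ Ideal.span {q}, (mkT.comp (mapRingHom mkg)) aa = 0 := by
      intro aa haa
      obtain ⟨bb, rfl⟩ := Ideal.mem_span_singleton.mp haa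
      rw [RingHom.comp_apply, coe_mapRingHom, Polynomial.map_mul, ← hqb, map_mul,
        mk_q_eq_zero]
      exact zero_mul (mkT (map mkg bb))
    set ψ := Ideal.Quotient.lift (Ideal.span {q}) (mkT.comp (mapRingHom mkg)) hker0 with hψ
    have hψmk : ∀ f : R[X], ψ (mkq f) = mkT (f.map mkg) := by
      intro f
      simp only [hψ, hmkq, Ideal.Quotient.lift_mk, RingHom.comp_apply, coe_mapRingHom]
    have hker : ∀ z, mkq (C (γ ^ (e - 1))) * z = 0 → ψ z = 0 := by
      intro z hz
      have hgz : mkq (polyRep q z) = z := mk_polyRep hqm z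
      have hCg : C (γ ^ (e - 1)) * polyRep q z = 0 := by
        refine monic_dvd_eq_zero hqm ?_ ?_
        · apply Ideal.mem_span_singleton.mp
          apply Ideal.Quotient.eq_zero_iff_mem.mp
          rw [map_mul, hgz]
          exact hz
        · calc (C (γ ^ (e - 1)) * polyRep q z).degree
              ≤ (C (γ ^ (e - 1))).degree + (polyRep q z).degree := degree_mul_le _ _
            _ ≤ 0 + (polyRep q z).degree := add_le_add_left degree_C_le _
            _ = (polyRep q z).degree := zero_add _
            _ < q.degree := polyRep_degree_lt hqm z
      have hmap0 : (polyRep q z).map mkg = 0 := by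
        ext i
        rw [Polynomial.coeff_map, Polynomial.coeff_zero]
        apply Ideal.Quotient.eq_zero_iff_mem.mpr
        apply ann_of_mul_pow_eq_zero hγ hmax
        rw [mul_comm, ← coeff_C_mul, hCg, coeff_zero]
      rw [← hgz, hψmk, hmap0, map_zero]
    have hζ : mkq (C (γ ^ (e - 1)))
        * (mkq σ - (mkq h) ^ (e - 1) * (mkq (X ^ n - C l₀)) ^ t * a) = 0 := by
      have e1 : mkq (C (γ ^ (e - 1))) * mkq σ = c := by rw [← map_mul, ← hρσ, hmkρ]
      have e2 : mkq (C (γ ^ (e - 1)))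
          * ((mkq h) ^ (e - 1) * (mkq (X ^ n - C l₀)) ^ t * a) = c := by
        rw [← ha, hpowν]; ring
      rw [mul_sub, e1, e2, sub_self]
    have hψ0 := hker _ hζ
    rw [map_sub, map_mul, map_mul, map_pow, map_pow, hψmk, hψmk, hψmk] at hψ0
    obtain ⟨α, hα⟩ := Ideal.Quotient.mk_surjective (ψ a)
    have hδdvd : qb ∣ (σ.map mkg
        - (h.map mkg) ^ (e - 1) * ((X ^ n - C l₀ : R[X]).map mkg) ^ t * α) := by
      apply Ideal.mem_span_singleton.mp
      apply Ideal.Quotient.eq_zero_iff_mem.mp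
      rw [map_sub, map_mul, map_mul, map_pow, map_pow, hα]
      exact hψ0
    obtain ⟨δ, hδ⟩ := hδdvd
    have hqbar : qb = ((X ^ n - C l₀ : R[X]).map mkg) ^ p ^ s := by
      rw [hqb, hqdef, hL]
      simp only [Polynomial.map_sub, Polynomial.map_pow, Polynomial.map_X, Polynomial.map_C]
      rw [frob_field p s n hp (mkg l₀)]
      have hγ0 : mkg γ = 0 :=
        Ideal.Quotient.eq_zero_iff_mem.mpr (Ideal.subset_span (Set.mem_singleton _))
      rw [map_add, map_mul, hγ0, zero_mul, add_zero, map_pow]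
    have hdvd3 : ((X ^ n - C l₀ : R[X]).map mkg) ^ t ∣ σ.map mkg := by
      refine ⟨(h.map mkg) ^ (e - 1) * α
        + ((X ^ n - C l₀ : R[X]).map mkg) ^ (p ^ s - t) * δ, ?_⟩
      have hsplit2 : ((X ^ n - C l₀ : R[X]).map mkg) ^ p ^ s
          = ((X ^ n - C l₀ : R[X]).map mkg) ^ t
            * ((X ^ n - C l₀ : R[X]).map mkg) ^ (p ^ s - t) := by
        rw [← pow_add]; congr 1; omega
      calc σ.map mkg
          = (h.map mkg) ^ (e - 1) * ((X ^ n - C l₀ : R[X]).map mkg) ^ t * α + qb * δ := by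
            linear_combination hδ
        _ = _ := by rw [hqbar, hsplit2]; ring
    haveI hMI : (Ideal.span {γ}).IsMaximal := span_isMaximal hmax
    letI : Field (R ⧸ Ideal.span {γ}) := Ideal.Quotient.field _
    have hgbm : ((X ^ n - C l₀ : R[X]).map mkg).Monic := (monic_X_pow_sub_C _ hn.ne').map _
    obtain ⟨β, hβ⟩ := hdvd3
    have hβne : β ≠ 0 := fun h0 => hσbne (by rw [hβ, h0, mul_zero])
    have hnd1 : (((X ^ n - C l₀ : R[X]).map mkg) ^ t).natDegree = t * n := by
      rw [hgbm.natDegree_pow]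
      congr 1
      rw [Polynomial.map_sub, Polynomial.map_pow, Polynomial.map_X, Polynomial.map_C,
        natDegree_X_pow_sub_C]
    have hdd : n * t ≤ (σ.map mkg).natDegree := by
      rw [hβ, natDegree_mul (pow_ne_zero _ hgbm.ne_zero) hβne, hnd1, Nat.mul_comm n t]
      exact Nat.le_add_right _ _
    have hlead : (σ.map mkg).coeff ((σ.map mkg).natDegree) ≠ 0 := by
      show (σ.map mkg).leadingCoeff ≠ 0
      exact mt leadingCoeff_eq_zero.mp hσbne
    have hunit : IsUnit (σ.coeff ((σ.map mkg).natDegree)) := by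
      by_contra hnu
      apply hlead
      rw [Polynomial.coeff_map]
      exact Ideal.Quotient.eq_zero_iff_mem.mpr ((hmax _).mpr hnu)
    have hρd : ρ.coeff ((σ.map mkg).natDegree) ≠ 0 := by
      rw [hρσ, coeff_C_mul]
      intro h0
      rw [mul_comm] at h0
      exact hγ ((hunit.mul_right_eq_zero).mp h0)
    have hfin : n * t ≤ ρ.natDegree := le_trans hdd (le_natDegree_of_ne_zero hρd)
    omega
  · -- Case 3 : ν = e p^s
    intro hν3
    have h0 : mkq ((X ^ n - C l₀) ^ ν) = 0 := by rw [map_pow, hν3, hUe]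
    rw [h0]
    unfold dRT
    convert Nat.sInf_empty using 2
    ext x
    simp only [Set.mem_setOf_eq, Set.mem_empty_iff_false, iff_false, not_exists]
    rintro c ⟨hc, hc0, -⟩
    rw [Ideal.span_singleton_eq_bot.mpr rfl] at hc
    exact hc0 (Ideal.mem_bot.mp hc)
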